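/- Let F'/F be a quadratic field extension, A an F-algebra, and X an irreducible A⊗_F F'-module. Then X is defined over F (i.e., admits a model over F) if and only if the restriction of scalars Y = res_{F'/F} X is a reducible A-module. Moreover, in this case Y decomposes into two isomorphic irreducible summands. -/

import Mathlib

open scoped TensorProduct

/-- The canonical `F`-linear map `F' ⊗_F M → X'`, `c ⊗ m ↦ c • m`, associated to an
`F`-subspace `M` of an `A ⊗_F F'`-module `X'`. -/
noncomputable def modelMap (F F' : Type) [Field F] [Field F'] [Algebra F F']
    (X' : Type) [AddCommGroup X'] [Module F X'] [Module F' X']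
    [IsScalarTower F F' X'] [SMulCommClass F F' X']
    (M : Submodule F X') : (F' ⊗[F] ↥M) →ₗ[F] X' :=
  TensorProduct.lift
    (LinearMap.mk₂ F (fun (c : F') (m : ↥M) => c • (m : X'))
      (fun a b m => by simp [add_smul])
      (fun r a m => by simp [smul_assoc])
      (fun a m₁ m₂ => by simp [smul_add])
      (fun r a m => by
        simp only [SetLike.val_smul]
        exact smul_comm a r (m : X')))

section Aux

variable (F F' : Type) [Field F] [Field F'] [Algebra F F']
variable (X' : Type) [AddCommGroup X'] [Module F X']

/-- Auxiliary map `F' ⊗ M → M × M` reading off coordinates w.r.t. a basis of `F'`. -/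
noncomputable def psiMap (b : Module.Basis (Fin 2) F F') (M : Submodule F X') :
    (F' ⊗[F] ↥M) →ₗ[F] ↥M × ↥M :=
  TensorProduct.lift
    (LinearMap.mk₂ F (fun (c : F') (m : ↥M) => (b.repr c 0 • m, b.repr c 1 • m))
      (fun a a' m => by simp [add_smul, Prod.ext_iff]
      )
      (fun r a m => by simp [mul_smul, Prod.ext_iff])
      (fun a m m' => by simp [smul_add, Prod.ext_iff])
      (fun r a m => by simp [smul_comm r, Prod.ext_iff]))

lemma psiMap_tmul (b : Module.Basis (Fin 2) F F') (M : Submodule F X') (c : F') (m : ↥M) :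
    psiMap F F' X' b M (c ⊗ₜ[F] m) = (b.repr c 0 • m, b.repr c 1 • m) := rfl

lemma psiMap_one_tmul (b : Module.Basis (Fin 2) F F') (hb0 : b 0 = 1) (M : Submodule F X') (m : ↥M) :
    psiMap F F' X' b M ((1 : F') ⊗ₜ[F] m) = (m, 0) := by
  rw [psiMap_tmul, ← hb0, b.repr_self]
  simp [Finsupp.single_apply]

lemma psiMap_b1_tmul (b : Module.Basis (Fin 2) F F') (M : Submodule F X') (m : ↥M) :
    psiMap F F' X' b M ((b 1) ⊗ₜ[F] m) = (0, m) := by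
  rw [psiMap_tmul, b.repr_self]
  simp [Finsupp.single_apply]

lemma tensor_decomp (b : Module.Basis (Fin 2) F F') (hb0 : b 0 = 1) (M : Submodule F X')
    (t : F' ⊗[F] ↥M) :
    t = (1 : F') ⊗ₜ[F] (psiMap F F' X' b M t).1 + (b 1) ⊗ₜ[F] (psiMap F F' X' b M t).2 := by
  induction t using TensorProduct.induction_on with
  | zero => simp
  | tmul c m =>
      rw [psiMap_tmul]
      conv_lhs => rw [← b.sum_repr c]
      rw [Fin.sum_univ_two, hb0, TensorProduct.add_tmul, TensorProduct.smul_tmul,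
        TensorProduct.smul_tmul]
  | add x y hx hy =>
      rw [map_add, Prod.fst_add, Prod.snd_add, TensorProduct.tmul_add, TensorProduct.tmul_add]
      conv_lhs => rw [hx, hy]
      abel

variable [Module F' X'] [IsScalarTower F F' X'] [SMulCommClass F F' X']

lemma modelMap_tmul (M : Submodule F X') (c : F') (m : ↥M) :
    modelMap F F' X' M (c ⊗ₜ[F] m) = c • (m : X') := rfl

lemma modelMap_eq (b : Module.Basis (Fin 2) F F') (hb0 : b 0 = 1) (M : Submodule F X')
    (t : F' ⊗[F] ↥M) :
    modelMap F F' X' M t =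
      ((psiMap F F' X' b M t).1 : X') + (b 1) • ((psiMap F F' X' b M t).2 : X') := by
  conv_lhs => rw [tensor_decomp F F' X' b hb0 M t]
  rw [map_add, modelMap_tmul, modelMap_tmul, one_smul]

end Aux

/-- **Descent criterion along a quadratic extension.**
Let `F'/F` be a quadratic field extension, `A` an `F`-algebra, and `X'` an irreducible
`A ⊗_F F'`-module (encoded via commuting `A`- and `F'`-actions).  Then `X'` is defined over
`F` (i.e. admits an `A`-stable `F`-form `M` with `F' ⊗_F M ≅ X'`) if and only if the
restriction of scalars `Y = res_{F'/F} X'` is a *reducible* `A`-module; and in this case `Y`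
decomposes as a direct sum of two isomorphic irreducible `A`-submodules. -/
theorem definedOver_iff_restriction_reducible
    (F F' : Type) [Field F] [Field F'] [Algebra F F']
    (hquad : Module.finrank F F' = 2)
    (A : Type) [Ring A] [Algebra F A]
    (X' : Type) [AddCommGroup X'] [Module F X'] [Module F' X'] [Module A X']
    [IsScalarTower F F' X'] [IsScalarTower F A X'] [SMulCommClass A F' X']
    [SMulCommClass F F' X']
    (hnt : Nontrivial X')
    (hsimple : ∀ p : Submodule A X',
      (∀ (c : F'), ∀ x ∈ p, c • x ∈ p) → p = ⊥ ∨ p = ⊤) :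
    ((∃ M : Submodule F X',
        (∀ (a : A), ∀ x ∈ M, a • x ∈ M) ∧ Function.Bijective (modelMap F F' X' M)) ↔
      ¬ IsSimpleModule A X') ∧
    (¬ IsSimpleModule A X' →
      ∃ Y₁ Y₂ : Submodule A X', IsCompl Y₁ Y₂ ∧
        IsSimpleModule A ↥Y₁ ∧ IsSimpleModule A ↥Y₂ ∧ Nonempty (↥Y₁ ≃ₗ[A] ↥Y₂)) := by
  classical
  obtain ⟨x0, hx0⟩ := exists_ne (0 : X')
  -- a basis (1, α) of F' over F
  have h1 : ∃ α : F', α ∉ Submodule.span F {(1 : F')} := by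
    by_contra h
    push_neg at h
    have hle : Module.finrank F F' ≤ 1 := by
      refine finrank_le_one (1 : F') fun w => ?_
      obtain ⟨c, hc⟩ := Submodule.mem_span_singleton.mp (h w)
      exact ⟨c, hc⟩
    omega
  obtain ⟨α0, hα0⟩ := h1
  have hα0ne : α0 ≠ 0 := fun h => hα0 (h ▸ Submodule.zero_mem _)
  have hli : LinearIndependent F ![(1 : F'), α0] := by
    rw [linearIndependent_fin2]
    refine ⟨by simpa using hα0ne, fun a ha => ?_⟩
    simp only [Matrix.cons_val_one, Matrix.head_cons, Matrix.cons_val_zero] at ha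
    have ha0 : a ≠ 0 := by
      rintro rfl
      simp at ha
    exact hα0 (Submodule.mem_span_singleton.mpr
      ⟨a⁻¹, by rw [← ha, inv_smul_smul₀ ha0]⟩)
  let b : Module.Basis (Fin 2) F F' :=
    basisOfLinearIndependentOfCardEqFinrank hli (by simp [hquad])
  have hcoe : ⇑b = ![(1 : F'), α0] := coe_basisOfLinearIndependentOfCardEqFinrank hli _
  have hb0 : b 0 = 1 := by rw [hcoe]; rfl
  set α : F' := b 1 with hαdef
  have hαne : α ≠ 0 := b.ne_zero 1
  -- the A-linear "multiplication by α" map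
  let αm : X' →ₗ[A] X' :=
    { toFun := fun x => α • x
      map_add' := fun x y => smul_add α x y
      map_smul' := fun a x => (smul_comm a α x).symm }
  have hαm : ∀ x : X', αm x = α • x := fun _ => rfl
  have hαinj : Function.Injective αm := by
    intro x y hxy
    have h := congrArg (fun z => α⁻¹ • z) hxy
    simpa [hαm, inv_smul_smul₀ hαne] using h
  -- F-smul closure in A-submodules
  have hFs : ∀ (N : Submodule A X') (r : F), ∀ x ∈ N, r • x ∈ N := by
    intro N r x hx
    rw [← algebraMap_smul A r x]
    exact N.smul_mem _ hx
  have hdecomp : ∀ (c : F') (x : X'),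
      c • x = b.repr c 0 • x + b.repr c 1 • (α • x) := by
    intro c x
    conv_lhs => rw [← b.sum_repr c]
    rw [Fin.sum_univ_two, hb0, add_smul, smul_assoc, smul_assoc, one_smul]
  -- stability of Z ⊔ αZ
  have hstab_sup : ∀ Z : Submodule A X', ∀ (c : F'), ∀ x ∈ Z ⊔ Z.map αm,
      c • x ∈ Z ⊔ Z.map αm := by
    intro Z c x hx
    have hαx : α • x ∈ Z ⊔ Z.map αm := by
      obtain ⟨z, hz, w, hw, rfl⟩ := Submodule.mem_sup.mp hx
      obtain ⟨z', hz', rfl⟩ := hw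
      rw [smul_add]
      refine Submodule.add_mem _ (Submodule.mem_sup_right (Submodule.mem_map_of_mem hz)) ?_
      have hrw : α • (αm z') = b.repr (α * α) 0 • z' + b.repr (α * α) 1 • (α • z') := by
        rw [hαm, smul_smul, hdecomp]
      rw [hrw]
      refine Submodule.add_mem _
        (Submodule.mem_sup_left (hFs Z _ _ hz')) ?_
      exact hFs _ _ _ (Submodule.mem_sup_right (Submodule.mem_map_of_mem hz'))
    rw [hdecomp c x]
    exact Submodule.add_mem _ (hFs _ _ _ hx) (hFs _ _ _ hαx)
  -- stability of Z ⊓ αZ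
  have hstab_inf : ∀ Z : Submodule A X', ∀ (c : F'), ∀ x ∈ Z ⊓ Z.map αm,
      c • x ∈ Z ⊓ Z.map αm := by
    intro Z c x hx
    obtain ⟨hx1, hx2⟩ := hx
    have hαx : α • x ∈ Z ⊓ Z.map αm := by
      refine ⟨?_, Submodule.mem_map_of_mem hx1⟩
      obtain ⟨z', hz', hz'eq⟩ := hx2
      rw [hαm] at hz'eq
      rw [← hz'eq, smul_smul, hdecomp]
      rw [hz'eq]
      exact Submodule.add_mem _ (hFs _ _ _ hz') (hFs _ _ _ hx1)
    rw [hdecomp c x]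
    exact Submodule.add_mem _ (Submodule.mem_inf.mpr ⟨hFs _ _ _ hx1, hFs _ _ _ hx2⟩)
      (Submodule.mem_inf.mpr ⟨hFs _ _ _ hαx.1, hFs _ _ _ hαx.2⟩)
  -- key dichotomy
  have key : ∀ Y₁ : Submodule A X', Y₁ ≠ ⊥ → Y₁ ≠ ⊤ →
      Y₁ ⊓ Y₁.map αm = ⊥ ∧ Y₁ ⊔ Y₁.map αm = ⊤ := by
    intro Y₁ hbot htop
    constructor
    · rcases hsimple _ (hstab_inf Y₁) with h | h
      · exact h
      · exact absurd (eq_top_iff.mpr (h ▸ inf_le_left)) htop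
    · rcases hsimple _ (hstab_sup Y₁) with h | h
      · exact absurd (le_bot_iff.mp (h ▸ le_sup_left)) hbot
      · exact h
  have hbt : (⊥ : Submodule A X') ≠ ⊤ := by
    intro h
    have : x0 ∈ (⊥ : Submodule A X') := by rw [h]; trivial
    exact hx0 (by simpa using this)
  have exY : ¬ IsSimpleModule A X' → ∃ Y₁ : Submodule A X', Y₁ ≠ ⊥ ∧ Y₁ ≠ ⊤ := by
    intro hns
    by_contra h
    push_neg at h
    haveI : Nontrivial (Submodule A X') := ⟨⊥, ⊤, hbt⟩
    haveI : IsSimpleOrder (Submodule A X') := ⟨fun a => or_iff_not_imp_left.mpr (h a)⟩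
    exact hns ⟨⟩
  have hatom : ∀ Y₁ : Submodule A X', Y₁ ≠ ⊥ → Y₁ ≠ ⊤ → IsAtom Y₁ := by
    intro Y₁ hbot htop
    obtain ⟨hinf, _⟩ := key Y₁ hbot htop
    refine ⟨hbot, fun Z hZ => ?_⟩
    by_contra hZb
    have hZt : Z ≠ ⊤ := fun h => htop (top_le_iff.mp (h ▸ hZ.le))
    obtain ⟨_, hZsup⟩ := key Z hZb hZt
    have hle : Z ≤ Y₁ := hZ.le
    have h1 : Y₁ ⊓ Z.map αm = ⊥ :=
      le_bot_iff.mp (hinf ▸ inf_le_inf_left Y₁ (Submodule.map_mono hle))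
    have hmod := inf_sup_assoc_of_le (Z.map αm) hle
    rw [h1, bot_sup_eq, sup_comm (Z.map αm) Z, hZsup, inf_top_eq] at hmod
    exact hZ.ne hmod
  constructor
  · constructor
    · -- model exists → not simple
      rintro ⟨M, hA, hinj, hsurj⟩ hsimp
      let N : Submodule A X' :=
        { carrier := (M : Set X')
          add_mem' := fun h h' => M.add_mem h h'
          zero_mem' := M.zero_mem
          smul_mem' := fun a {x} hx => hA a x hx }
      have hNmem : ∀ x : X', x ∈ N ↔ x ∈ M := fun _ => Iff.rfl
      rcases hsimp.eq_bot_or_eq_top (a := N) with hN | hN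
      · -- N = ⊥ contradicts surjectivity
        obtain ⟨t, ht⟩ := hsurj x0
        rw [modelMap_eq F F' X' b hb0 M t] at ht
        have e1 : ((psiMap F F' X' b M t).1 : X') = 0 := by
          have hm : ((psiMap F F' X' b M t).1 : X') ∈ N := (psiMap F F' X' b M t).1.2
          rw [hN] at hm
          simpa using hm
        have e2 : ((psiMap F F' X' b M t).2 : X') = 0 := by
          have hm : ((psiMap F F' X' b M t).2 : X') ∈ N := (psiMap F F' X' b M t).2.2
          rw [hN] at hm
          simpa using hm
        rw [e1, e2, smul_zero, add_zero] at ht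
        exact hx0 ht.symm
      · -- N = ⊤ contradicts injectivity
        have hmem : ∀ x : X', x ∈ M := by
          intro x
          have : x ∈ N := by rw [hN]; trivial
          exact this
        set t : F' ⊗[F] ↥M :=
          (1 : F') ⊗ₜ[F] (⟨α • x0, hmem _⟩ : ↥M) - α ⊗ₜ[F] (⟨x0, hmem _⟩ : ↥M) with htdef
        have h0 : modelMap F F' X' M t = 0 := by
          rw [htdef, map_sub, modelMap_tmul, modelMap_tmul, one_smul, sub_self]
        have ht0 : t = 0 := hinj (by rw [h0, map_zero])
        have hψ := congrArg (psiMap F F' X' b M) ht0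
        rw [map_zero, htdef, map_sub, psiMap_one_tmul F F' X' b hb0,
          psiMap_b1_tmul F F' X' b] at hψ
        rw [sub_eq_zero] at hψ
        exact hx0 (by simpa using (congrArg (fun p => ((p.2 : ↥M) : X')) hψ).symm)
    · -- not simple → model exists
      intro hns
      obtain ⟨Y₁, hbot, htop⟩ := exY hns
      obtain ⟨hinf, hsup⟩ := key Y₁ hbot htop
      refine ⟨Y₁.restrictScalars F, fun a x hx => Y₁.smul_mem a hx, ?_, ?_⟩
      · -- injective
        rw [← LinearMap.ker_eq_bot]
        rw [Submodule.eq_bot_iff]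
        intro t ht
        rw [LinearMap.mem_ker, modelMap_eq F F' X' b hb0 _ t] at ht
        set m₁ := (psiMap F F' X' b (Y₁.restrictScalars F) t).1 with hm₁
        set m₂ := (psiMap F F' X' b (Y₁.restrictScalars F) t).2 with hm₂
        have h1 : (m₁ : X') ∈ Y₁ := m₁.2
        have h2 : α • (m₂ : X') ∈ Y₁.map αm := ⟨(m₂ : X'), m₂.2, rfl⟩
        have hc1 : (m₁ : X') ∈ Y₁ ⊓ Y₁.map αm := by
          refine ⟨h1, ?_⟩
          have : (m₁ : X') = -(α • (m₂ : X')) :=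
            eq_neg_of_add_eq_zero_left ht
          rw [this]
          exact (Y₁.map αm).neg_mem h2
        rw [hinf] at hc1
        have e1 : (m₁ : X') = 0 := by simpa using hc1
        have e2 : (m₂ : X') = 0 := by
          have : α • (m₂ : X') = 0 := by
            rw [e1, zero_add] at ht
            exact ht
          have h' := congrArg (fun z => α⁻¹ • z) this
          simpa [inv_smul_smul₀ hαne] using h'
        have em₁ : m₁ = 0 := Subtype.ext (e1.trans (ZeroMemClass.coe_zero _).symm)
        have em₂ : m₂ = 0 := Subtype.ext (e2.trans (ZeroMemClass.coe_zero _).symm)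
        rw [tensor_decomp F F' X' b hb0 _ t, ← hm₁, ← hm₂, em₁, em₂]
        simp
      · -- surjective
        intro x
        have hx : x ∈ Y₁ ⊔ Y₁.map αm := by rw [hsup]; trivial
        obtain ⟨z, hz, w, hw, rfl⟩ := Submodule.mem_sup.mp hx
        obtain ⟨z', hz', rfl⟩ := hw
        refine ⟨(1 : F') ⊗ₜ[F] (⟨z, hz⟩ : ↥(Y₁.restrictScalars F)) +
          α ⊗ₜ[F] (⟨z', hz'⟩ : ↥(Y₁.restrictScalars F)), ?_⟩
        rw [map_add, modelMap_tmul, modelMap_tmul, one_smul]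
        rfl
  · -- decomposition
    intro hns
    obtain ⟨Y₁, hbot, htop⟩ := exY hns
    obtain ⟨hinf, hsup⟩ := key Y₁ hbot htop
    have e : ↥Y₁ ≃ₗ[A] ↥(Y₁.map αm) := Submodule.equivMapOfInjective αm hαinj Y₁
    haveI hS1 : IsSimpleModule A ↥Y₁ :=
      isSimpleModule_iff_isAtom.mpr (hatom Y₁ hbot htop)
    refine ⟨Y₁, Y₁.map αm, ⟨disjoint_iff.mpr hinf, codisjoint_iff.mpr hsup⟩,
      hS1, IsSimpleModule.congr e.symm, ⟨e⟩⟩
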